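/- arXiv:2309.15286 — 3 statements merged into one kernel-verified Lean document; each statement's English description precedes it below -/
import Mathlib

section
/- Let k ≥ 1 and work in ℝ^k. Let v_1 = (1,1,…,1) be the all-ones vector and let v_{j+1} = √k · e_j for j = 1,…,k, where e_1,…,e_k is the standard basis, and set P = {v_1,…,v_{k+1}}. Then: (a) v_1,…,v_k is a greedy sequence for P; (b) vol(v_1,…,v_k)² = k^{k−1}; and (c) vol(v_2,…,v_{k+1})² = k^k. In particular, vol(v_2,…,v_{k+1}) = √k · vol(v_1,…,v_k) with vol(v_1,…,v_k) > 0, so the (1+√k) local-optimality guarantee of the greedy algorithm is tight up to the additive constant 1. -/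
open scoped RealInnerProductSpace

/-- `vol u` is the nonnegative real number whose square equals the determinant of the
Gram matrix `(⟪u a, u b⟫)_{a,b}` of the vectors `u 0, …, u (m-1)` in `ℝ^d`. -/
noncomputable def vol {d m : ℕ} (u : Fin m → EuclideanSpace ℝ (Fin d)) : ℝ :=
  Real.sqrt (Matrix.det (Matrix.of fun a b : Fin m => ⟪u a, u b⟫))

/-- `v 0, …, v (k-1)` is a greedy sequence for the finite set `P`: each `v t` belongs to `P`,
and for every `t` and every `p ∈ P`, `vol (v 0, …, v (t-1), p) ≤ vol (v 0, …, v (t-1), v t)`. -/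
def IsGreedySeq {d k : ℕ} (P : Finset (EuclideanSpace ℝ (Fin d)))
    (v : Fin k → EuclideanSpace ℝ (Fin d)) : Prop :=
  (∀ t, v t ∈ P) ∧
  ∀ t : Fin k, ∀ p ∈ P,
    vol (Fin.snoc (fun j : Fin t.val => v (Fin.castLE t.isLt.le j)) p) ≤
    vol (Fin.snoc (fun j : Fin t.val => v (Fin.castLE t.isLt.le j)) (v t))

/-- The "bordered" Gram matrix: a `c` in the top-left corner, `√c` along the rest of the
first row and column, and `c` times the identity in the remaining block. -/
noncomputable def bMat (n : ℕ) (c : ℝ) : Matrix (Fin n) (Fin n) ℝ :=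
  Matrix.of fun a b =>
    if a.val = 0 ∧ b.val = 0 then c
    else if a.val = 0 ∨ b.val = 0 then Real.sqrt c
    else if a = b then c else 0

/-- Determinant of the bordered Gram matrix, by the Schur complement. -/
lemma bMat_det (m : ℕ) (c : ℝ) (hc : 0 < c) :
    (bMat (m + 1) c).det = c ^ m * (c - m) := by
  classical
  set e : Fin 1 ⊕ Fin m ≃ Fin (m + 1) :=
    finSumFinEquiv.trans (finCongr (Nat.add_comm 1 m)) with he
  have hval_inl : ∀ i : Fin 1, (e (Sum.inl i)).val = 0 := by
    intro i; simp [he, finSumFinEquiv]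
  have hval_inr : ∀ j : Fin m, (e (Sum.inr j)).val = 1 + j.val := by
    intro j; simp [he, finSumFinEquiv, Nat.add_comm]
  have key : (bMat (m + 1) c).submatrix e e =
      Matrix.fromBlocks (Matrix.of fun _ _ => c) (Matrix.of fun _ _ => Real.sqrt c)
        (Matrix.of fun _ _ => Real.sqrt c) (c • (1 : Matrix (Fin m) (Fin m) ℝ)) := by
    ext a b
    obtain (i | j) := a <;> obtain (i' | j') := b
    · simp only [Matrix.submatrix_apply, Matrix.fromBlocks_apply₁₁, Matrix.of_apply, bMat]
      rw [if_pos ⟨hval_inl i, hval_inl i'⟩]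
    · simp only [Matrix.submatrix_apply, Matrix.fromBlocks_apply₁₂, Matrix.of_apply, bMat]
      rw [if_neg (fun h => by have h2 := h.2; rw [hval_inr] at h2; omega),
        if_pos (Or.inl (hval_inl i))]
    · simp only [Matrix.submatrix_apply, Matrix.fromBlocks_apply₂₁, Matrix.of_apply, bMat]
      rw [if_neg (fun h => by have h2 := h.1; rw [hval_inr] at h2; omega),
        if_pos (Or.inr (hval_inl i'))]
    · simp only [Matrix.submatrix_apply, Matrix.fromBlocks_apply₂₂, Matrix.of_apply, bMat,
        Matrix.smul_apply, Matrix.one_apply, smul_eq_mul]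
      rw [if_neg (fun h => by have h2 := h.1; rw [hval_inr] at h2; omega),
        if_neg (fun h => by
          obtain h2 | h2 := h <;> rw [hval_inr] at h2 <;> omega),
        if_congr (by rw [e.injective.eq_iff, Sum.inr.injEq]) rfl rfl]
      split <;> simp
  have hmul : (c • (1 : Matrix (Fin m) (Fin m) ℝ)) * (c⁻¹ • (1 : Matrix (Fin m) (Fin m) ℝ)) = 1 := by
    rw [Matrix.smul_mul, Matrix.mul_smul, Matrix.one_mul, smul_smul,
      mul_inv_cancel₀ hc.ne', one_smul]
  haveI : Invertible (c • (1 : Matrix (Fin m) (Fin m) ℝ)) := ⟨c⁻¹ • 1, by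
    rw [Matrix.smul_mul, Matrix.mul_smul, Matrix.one_mul, smul_smul,
      inv_mul_cancel₀ hc.ne', one_smul], hmul⟩
  rw [← Matrix.det_submatrix_equiv_self e, key, Matrix.det_fromBlocks₂₂,
    invOf_eq_right_inv hmul]
  have h1 : ((Matrix.of fun _ _ => Real.sqrt c : Matrix (Fin 1) (Fin m) ℝ) *
      (c⁻¹ • (1 : Matrix (Fin m) (Fin m) ℝ)) *
      (Matrix.of fun _ _ => Real.sqrt c : Matrix (Fin m) (Fin 1) ℝ)) =
      Matrix.of fun _ _ => (m : ℝ) := by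
    rw [Matrix.mul_smul, Matrix.mul_one, Matrix.smul_mul]
    ext a b
    simp only [Matrix.smul_apply, Matrix.mul_apply, Matrix.of_apply, smul_eq_mul,
      Real.mul_self_sqrt hc.le, Finset.sum_const, Finset.card_univ, Fintype.card_fin,
      nsmul_eq_mul]
    field_simp
  rw [h1]
  have h2 : ((Matrix.of fun _ _ => c : Matrix (Fin 1) (Fin 1) ℝ) -
      Matrix.of fun _ _ => (m : ℝ)).det = c - m := by
    rw [Matrix.det_fin_one]; rfl
  rw [h2, Matrix.det_smul, Matrix.det_one]
  simp

/-- All pairwise inner products among the points `v 0, …, v k`. -/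
lemma inner_v {k : ℕ} (v : Fin (k+1) → EuclideanSpace ℝ (Fin k))
    (h0 : v 0 = ∑ j : Fin k, EuclideanSpace.single j (1:ℝ))
    (hs : ∀ j : Fin k, v j.succ = Real.sqrt k • EuclideanSpace.single j (1:ℝ)) :
    ∀ a b : Fin (k+1), ⟪v a, v b⟫ =
      if a.val = 0 ∧ b.val = 0 then (k:ℝ)
      else if a.val = 0 ∨ b.val = 0 then Real.sqrt k
      else if a = b then (k:ℝ) else 0 := by
  have hone : ∀ i j : Fin k, ⟪EuclideanSpace.single i (1:ℝ), EuclideanSpace.single j (1:ℝ)⟫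
      = if i = j then (1:ℝ) else 0 := by
    intro i j
    rw [EuclideanSpace.inner_single_left]
    simp [EuclideanSpace.single_apply, eq_comm]
  intro a b
  induction a using Fin.cases with
  | zero =>
    induction b using Fin.cases with
    | zero =>
      simp only [Fin.val_zero, if_pos (And.intro rfl rfl), h0, inner_sum, sum_inner, hone]
      simp
    | succ j =>
      have : (Fin.succ j).val ≠ 0 := by simp [Fin.val_succ]
      simp only [Fin.val_zero, hs, real_inner_smul_right, h0, sum_inner, hone]
      simp [this]
  | succ i =>
    have hi : (Fin.succ i).val ≠ 0 := by simp [Fin.val_succ]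
    induction b using Fin.cases with
    | zero =>
      simp only [Fin.val_zero, hs, real_inner_smul_left, h0, inner_sum, hone]
      simp [hi]
    | succ j =>
      have hj : (Fin.succ j).val ≠ 0 := by simp [Fin.val_succ]
      simp only [hs, real_inner_smul_left, real_inner_smul_right, hone]
      simp only [hi, hj, false_and, if_false, false_or, Fin.succ_inj]
      split <;> simp [Real.mul_self_sqrt (Nat.cast_nonneg k)]

/-- **Tightness of local optimality.** In `ℝ^k`, let `v 0 = (1, …, 1)` be the all-ones vector
and `v j.succ = √k • e j` for `j = 0, …, k-1` (so `v 0, …, v k` are the paper's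
`v_1, …, v_{k+1}`), and let `P = {v_1, …, v_{k+1}}`.  Then `v_1, …, v_k` is a greedy sequence
for `P`, `vol(v_1, …, v_k)² = k^(k-1)`, `vol(v_2, …, v_{k+1})² = k^k`, and in particular
`vol(v_2, …, v_{k+1}) = √k · vol(v_1, …, v_k)` with `vol(v_1, …, v_k) > 0`: swapping `v_1`
out for `v_{k+1}` multiplies the volume by exactly `√k`. -/
theorem greedy_tightness {k : ℕ} (hk : 1 ≤ k)
    (v : Fin (k + 1) → EuclideanSpace ℝ (Fin k))
    (h0 : v 0 = ∑ j : Fin k, EuclideanSpace.single j (1 : ℝ))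
    (hs : ∀ j : Fin k, v j.succ = Real.sqrt k • EuclideanSpace.single j (1 : ℝ))
    (P : Finset (EuclideanSpace ℝ (Fin k)))
    (hP : (P : Set (EuclideanSpace ℝ (Fin k))) = Set.range v) :
    IsGreedySeq P (fun j : Fin k => v j.castSucc) ∧
    vol (fun j : Fin k => v j.castSucc) ^ 2 = (k : ℝ) ^ (k - 1) ∧
    vol (fun j : Fin k => v j.succ) ^ 2 = (k : ℝ) ^ k ∧
    vol (fun j : Fin k => v j.succ) = Real.sqrt k * vol (fun j : Fin k => v j.castSucc) ∧
    0 < vol (fun j : Fin k => v j.castSucc) := by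
  have hinner := inner_v v h0 hs
  constructor
  · -- the greedy property
    have hmem : ∀ a, v a ∈ P := fun a => by
      rw [← Finset.mem_coe, hP]; exact ⟨a, rfl⟩
    have hdiag : ∀ a, ⟪v a, v a⟫ = (k:ℝ) := by
      intro a
      rw [hinner]
      split_ifs with h1 h2 h3 <;> first | rfl | tauto
    refine ⟨fun t => hmem _, ?_⟩
    intro t p hp
    obtain ⟨a, rfl⟩ : ∃ a, p = v a := by
      rw [← Finset.mem_coe, hP] at hp
      obtain ⟨a, ha⟩ := hp
      exact ⟨a, ha.symm⟩
    simp only []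
    have hsnoc : ∀ (q : Fin (k+1)) (x : Fin (t.val+1)),
        (Fin.snoc (fun j : Fin t.val => v (Fin.castLE t.isLt.le j).castSucc) (v q) :
          Fin (t.val+1) → EuclideanSpace ℝ (Fin k)) x =
        v (if h : x.val < t.val then (⟨x.val, by omega⟩ : Fin (k+1)) else q) := by
      intro q x
      induction x using Fin.lastCases with
      | last =>
        rw [Fin.snoc_last, dif_neg (by simp)]
      | cast j =>
        rw [Fin.snoc_castSucc, dif_pos (by simpa using j.isLt)]
        exact congrArg v (Fin.ext (by simp))
    rcases lt_trichotomy a.val t.val with hat | hat | hat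
    · -- `v a` already occurs in the prefix: the volume vanishes
      have hne : (⟨a.val, by omega⟩ : Fin (t.val+1)) ≠ Fin.last t.val := by
        simp only [ne_eq, Fin.ext_iff, Fin.val_last]
        omega
      have h0 : vol (Fin.snoc (fun j : Fin t.val => v (Fin.castLE t.isLt.le j).castSucc) (v a) :
          Fin (t.val+1) → EuclideanSpace ℝ (Fin k)) = 0 := by
        rw [vol, Matrix.det_zero_of_row_eq hne ?_, Real.sqrt_zero]
        funext y
        simp only [Matrix.of_apply]
        simp only [hsnoc]
        simp [hat]
      rw [h0]
      exact Real.sqrt_nonneg _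
    · -- `v a = v t.castSucc`: the two sequences coincide
      refine le_of_eq (congrArg vol (funext fun x => ?_))
      rw [hsnoc, hsnoc]
      split
      · rfl
      · exact congrArg v (Fin.ext (by simp only [Fin.coe_castSucc]; exact hat))
    · -- a fresh vector: the two Gram matrices coincide entrywise
      by_cases ht0 : t.val = 0
      · refine le_of_eq ?_
        simp only [vol]
        congr 1
        apply congrArg
        ext x y
        have hx : x = Fin.last t.val := by ext; omega
        have hy : y = Fin.last t.val := by ext; omega
        subst hx hy
        rw [Matrix.of_apply, Matrix.of_apply, hsnoc, hsnoc, dif_neg (by simp), dif_neg (by simp),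
          hdiag, hdiag]
      · refine le_of_eq ?_
        simp only [vol]
        congr 1
        apply congrArg
        ext x y
        rw [Matrix.of_apply, Matrix.of_apply, hsnoc, hsnoc, hsnoc, hsnoc, hinner, hinner]
        have hvx := x.isLt
        have hvy := y.isLt
        have hval : ∀ z : Fin (t.val+1), ∀ q : Fin (k+1),
            ((if h : z.val < t.val then (⟨z.val, by omega⟩ : Fin (k+1)) else q)).val =
            if z.val < t.val then z.val else q.val := by
          intro z q; split <;> rfl
        have h0a : ((if h : x.val < t.val then (⟨x.val, by omega⟩ : Fin (k+1)) else a)).val = 0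
            ↔ ((if h : x.val < t.val then (⟨x.val, by omega⟩ : Fin (k+1)) else t.castSucc)).val = 0 := by
          rw [hval, hval]; have := Fin.coe_castSucc t; split <;> constructor <;> intro h <;> omega
        have h0b : ((if h : y.val < t.val then (⟨y.val, by omega⟩ : Fin (k+1)) else a)).val = 0
            ↔ ((if h : y.val < t.val then (⟨y.val, by omega⟩ : Fin (k+1)) else t.castSucc)).val = 0 := by
          rw [hval, hval]; have := Fin.coe_castSucc t; split <;> constructor <;> intro h <;> omega
        have heq : ((if h : x.val < t.val then (⟨x.val, by omega⟩ : Fin (k+1)) else a) =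
              (if h : y.val < t.val then (⟨y.val, by omega⟩ : Fin (k+1)) else a))
            ↔ ((if h : x.val < t.val then (⟨x.val, by omega⟩ : Fin (k+1)) else t.castSucc) =
              (if h : y.val < t.val then (⟨y.val, by omega⟩ : Fin (k+1)) else t.castSucc)) := by
          rw [Fin.ext_iff, Fin.ext_iff, hval, hval, hval, hval]
          split_ifs <;> simp <;> omega
        simp only [h0a, h0b, heq]
  · -- the volume computations
    obtain ⟨m, rfl⟩ : ∃ m, k = m + 1 := ⟨k - 1, by omega⟩
    have hcpos : (0:ℝ) < ((m+1:ℕ):ℝ) := by positivity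
    have gram_succ : (Matrix.of fun a b : Fin (m+1) => ⟪v a.succ, v b.succ⟫)
        = ((m+1:ℕ):ℝ) • (1 : Matrix (Fin (m+1)) (Fin (m+1)) ℝ) := by
      ext a b
      rw [Matrix.of_apply, hinner]
      simp only [Fin.val_succ, Matrix.smul_apply, Matrix.one_apply, smul_eq_mul, Fin.succ_inj,
        Nat.succ_ne_zero, false_and, if_false, or_self, false_or]
      split <;> simp
    have gram_cast : (Matrix.of fun a b : Fin (m+1) => ⟪v a.castSucc, v b.castSucc⟫)
        = bMat (m+1) ((m+1:ℕ):ℝ) := by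
      ext a b
      rw [Matrix.of_apply, hinner, bMat, Matrix.of_apply]
      simp only [Fin.coe_castSucc, Fin.castSucc_inj]
    have vsucc : vol (fun j : Fin (m+1) => v j.succ) = Real.sqrt (((m+1:ℕ):ℝ)^(m+1)) := by
      simp only [vol]
      rw [gram_succ, Matrix.det_smul, Matrix.det_one, mul_one, Fintype.card_fin]
    have vcast : vol (fun j : Fin (m+1) => v j.castSucc) = Real.sqrt (((m+1:ℕ):ℝ)^m) := by
      simp only [vol]
      rw [gram_cast, bMat_det m _ hcpos]
      congr 1
      push_cast
      ring
    refine ⟨?_, ?_, ?_, ?_⟩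
    · rw [vcast, Real.sq_sqrt (by positivity)]
      simp
    · rw [vsucc, Real.sq_sqrt (by positivity)]
    · rw [vsucc, vcast, pow_succ', Real.sqrt_mul hcpos.le]
    · rw [vcast]
      positivity
end

section
/- Let P be a finite set of vectors in ℝ^d, let k ≥ 1, let v_1,…,v_k be a greedy sequence for P, and let v'_1,…,v'_k be the Gram–Schmidt orthogonalization of v_1,…,v_k. Then for every l ∈ {1,…,k} and every p ∈ P, |⟨p, v'_l⟩| ≤ ‖v'_l‖². Equivalently, when v'_l ≠ 0, the Gram–Schmidt coefficient α = ⟨p, v'_l⟩/‖v'_l‖² of any point p ∈ P along v'_l satisfies |α| ≤ 1. -/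
open scoped RealInnerProductSpace

/-- Helper instance so that `gramSchmidt` elaborates over `Fin n`. -/
instance finWellFoundedLT (n : ℕ) : WellFoundedLT (Fin n) := inferInstance

open InnerProductSpace Submodule

noncomputable def gram {d m : ℕ} (u : Fin m → EuclideanSpace ℝ (Fin d)) :
    Matrix (Fin m) (Fin m) ℝ :=
  Matrix.of fun a b => ⟪u a, u b⟫

variable {d m : ℕ}

lemma det_gram_snoc_add_smul (u : Fin m → EuclideanSpace ℝ (Fin d))
    (p : EuclideanSpace ℝ (Fin d)) (i : Fin m) (c : ℝ) :
    (gram (Fin.snoc u (p + c • u i))).det = (gram (Fin.snoc u p)).det := by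
  have hne : Fin.last m ≠ Fin.castSucc i := (Fin.castSucc_lt_last i).ne'
  have key : gram (Fin.snoc u (p + c • u i)) =
      Matrix.updateCol
        (Matrix.updateRow (gram (Fin.snoc u p)) (Fin.last m)
          (gram (Fin.snoc u p) (Fin.last m) + c • gram (Fin.snoc u p) (Fin.castSucc i)))
        (Fin.last m)
        (fun a =>
          Matrix.updateRow (gram (Fin.snoc u p)) (Fin.last m)
            (gram (Fin.snoc u p) (Fin.last m) + c • gram (Fin.snoc u p) (Fin.castSucc i))
            a (Fin.last m)
          + c • Matrix.updateRow (gram (Fin.snoc u p)) (Fin.last m)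
            (gram (Fin.snoc u p) (Fin.last m) + c • gram (Fin.snoc u p) (Fin.castSucc i))
            a (Fin.castSucc i)) := by
    ext a b
    refine Fin.lastCases ?_ (fun a' => ?_) a
    · refine Fin.lastCases ?_ (fun b' => ?_) b
      · rw [Matrix.updateCol_self, Matrix.updateRow_self]
        simp only [gram, Matrix.of_apply, Fin.snoc_last, Fin.snoc_castSucc, Pi.add_apply,
          Pi.smul_apply, smul_eq_mul, inner_add_left, inner_add_right, real_inner_smul_left,
          real_inner_smul_right]
        ring
      · rw [Matrix.updateCol_ne (Fin.castSucc_lt_last b').ne, Matrix.updateRow_self]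
        simp only [gram, Matrix.of_apply, Fin.snoc_last, Fin.snoc_castSucc, Pi.add_apply,
          Pi.smul_apply, smul_eq_mul, inner_add_left, real_inner_smul_left]
    · refine Fin.lastCases ?_ (fun b' => ?_) b
      · rw [Matrix.updateCol_self, Matrix.updateRow_ne (Fin.castSucc_lt_last a').ne]
        simp only [gram, Matrix.of_apply, Fin.snoc_last, Fin.snoc_castSucc, Pi.add_apply,
          Pi.smul_apply, smul_eq_mul, inner_add_right, real_inner_smul_right]
      · rw [Matrix.updateCol_ne (Fin.castSucc_lt_last b').ne,
          Matrix.updateRow_ne (Fin.castSucc_lt_last a').ne]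
        simp only [gram, Matrix.of_apply, Fin.snoc_castSucc]
  rw [key, Matrix.det_updateCol_add_smul_self _ hne c,
    Matrix.det_updateRow_add_smul_self _ hne c]

lemma det_gram_snoc_add_mem (u : Fin m → EuclideanSpace ℝ (Fin d))
    {w : EuclideanSpace ℝ (Fin d)} (hw : w ∈ Submodule.span ℝ (Set.range u))
    (p : EuclideanSpace ℝ (Fin d)) :
    (gram (Fin.snoc u (p + w))).det = (gram (Fin.snoc u p)).det := by
  suffices H : ∀ c : ℝ, ∀ p : EuclideanSpace ℝ (Fin d),
      (gram (Fin.snoc u (p + c • w))).det = (gram (Fin.snoc u p)).det by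
    simpa using H 1 p
  clear p
  induction hw using Submodule.span_induction with
  | mem x hx =>
    obtain ⟨i, rfl⟩ := hx
    intro c p
    exact det_gram_snoc_add_smul u p i c
  | zero => intro c p; simp
  | add x y hx hy ihx ihy =>
    intro c p
    have h : p + c • (x + y) = p + c • x + c • y := by rw [smul_add]; abel
    rw [h, ihy, ihx]
  | smul a x hx ih =>
    intro c p
    rw [smul_smul]
    exact ih (c * a) p

lemma det_gram_snoc_orthogonal (u : Fin m → EuclideanSpace ℝ (Fin d))
    (q : EuclideanSpace ℝ (Fin d)) (h : ∀ i, ⟪u i, q⟫ = 0) :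
    (gram (Fin.snoc u q)).det = (gram u).det * ‖q‖ ^ 2 := by
  rw [Matrix.det_succ_row _ (Fin.last m), Finset.sum_eq_single (Fin.last m)]
  · have h1 : gram (Fin.snoc u q) (Fin.last m) (Fin.last m) = ‖q‖ ^ 2 := by
      simp only [gram, Matrix.of_apply, Fin.snoc_last]
      exact real_inner_self_eq_norm_sq q
    have h2 : (gram (Fin.snoc u q)).submatrix (Fin.last m).succAbove (Fin.last m).succAbove
        = gram u := by
      ext a b
      simp [gram, Fin.succAbove_last, Fin.snoc_castSucc]
    rw [h1, h2]
    have h3 : ((-1 : ℝ)) ^ ((Fin.last m : ℕ) + (Fin.last m : ℕ)) = 1 :=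
      Even.neg_one_pow ⟨(Fin.last m : ℕ), rfl⟩
    rw [h3]; ring
  · intro j _ hj
    have h0 : gram (Fin.snoc u q) (Fin.last m) j = 0 := by
      obtain ⟨j', rfl⟩ : ∃ j', j = Fin.castSucc j' :=
        ⟨j.castPred hj, (Fin.castSucc_castPred j hj).symm⟩
      simp only [gram, Matrix.of_apply, Fin.snoc_last, Fin.snoc_castSucc]
      rw [real_inner_comm]
      exact h j'
    rw [h0]; ring
  · simp

lemma det_gram_snoc (u : Fin m → EuclideanSpace ℝ (Fin d)) (p : EuclideanSpace ℝ (Fin d)) :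
    (gram (Fin.snoc u p)).det = (gram u).det *
      ‖p - (orthogonalProjection (Submodule.span ℝ (Set.range u)) p : EuclideanSpace ℝ (Fin d))‖ ^ 2 := by
  set S := Submodule.span ℝ (Set.range u) with hS
  set q : EuclideanSpace ℝ (Fin d) := p - orthogonalProjection S p with hq
  have hmem : (orthogonalProjection S p : EuclideanSpace ℝ (Fin d)) ∈ S := SetLike.coe_mem _
  have h1 : p = q + (orthogonalProjection S p : EuclideanSpace ℝ (Fin d)) := by
    rw [hq]; abel
  have horth : ∀ i, ⟪u i, q⟫ = 0 := by
    intro i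
    exact (Submodule.mem_orthogonal S q).1
      (sub_starProjection_mem_orthogonal p) (u i)
      (Submodule.subset_span ⟨i, rfl⟩)
  calc (gram (Fin.snoc u p)).det
      = (gram (Fin.snoc u (q + (orthogonalProjection S p : EuclideanSpace ℝ (Fin d))))).det := by
        rw [← h1]
    _ = (gram (Fin.snoc u q)).det := det_gram_snoc_add_mem u hmem q
    _ = (gram u).det * ‖q‖ ^ 2 := det_gram_snoc_orthogonal u q horth

lemma vol_snoc (u : Fin m → EuclideanSpace ℝ (Fin d)) (p : EuclideanSpace ℝ (Fin d)) :
    vol (Fin.snoc u p) = Real.sqrt (gram u).det *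
      ‖p - (orthogonalProjection (Submodule.span ℝ (Set.range u)) p : EuclideanSpace ℝ (Fin d))‖ := by
  show Real.sqrt (gram (Fin.snoc u p)).det = _
  rw [det_gram_snoc, Real.sqrt_mul' _ (by positivity), Real.sqrt_sq (norm_nonneg _)]

section GS
variable {k : ℕ} (v : Fin k → EuclideanSpace ℝ (Fin d))

lemma sub_gramSchmidt_mem (l : Fin k) :
    v l - gramSchmidt ℝ v l ∈ Submodule.span ℝ (v '' Set.Iio l) := by
  rw [← span_gramSchmidt_Iio ℝ v l]
  have h : v l - gramSchmidt ℝ v l = ∑ i ∈ Finset.Iio l,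
      (orthogonalProjection (ℝ ∙ gramSchmidt ℝ v i) (v l) : EuclideanSpace ℝ (Fin d)) := by
    rw [gramSchmidt_def ℝ v l]; simp only [Submodule.starProjection_apply]; abel
  rw [h]
  refine Submodule.sum_mem _ fun i hi => ?_
  have h2 : (ℝ ∙ gramSchmidt ℝ v i) ≤ Submodule.span ℝ (gramSchmidt ℝ v '' Set.Iio l) := by
    rw [Submodule.span_singleton_le_iff_mem]
    exact Submodule.subset_span ⟨i, Finset.mem_Iio.mp hi, rfl⟩
  exact h2 (SetLike.coe_mem _)

lemma gramSchmidt_mem_orthogonal'' (l : Fin k) :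
    gramSchmidt ℝ v l ∈ (Submodule.span ℝ (v '' Set.Iio l))ᗮ := by
  rw [← span_gramSchmidt_Iio ℝ v l, Submodule.mem_orthogonal]
  intro x hx
  induction hx using Submodule.span_induction with
  | mem y hy =>
    obtain ⟨i, hi, rfl⟩ := hy
    exact gramSchmidt_orthogonal ℝ v (ne_of_lt hi)
  | zero => simp
  | add x y hx hy ihx ihy => rw [inner_add_left, ihx, ihy]; ring
  | smul a x hx ih => rw [real_inner_smul_left, ih]; ring

lemma sub_orthProj_eq_gramSchmidt (l : Fin k) :
    v l - (orthogonalProjection (Submodule.span ℝ (v '' Set.Iio l)) (v l) :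
      EuclideanSpace ℝ (Fin d)) = gramSchmidt ℝ v l := by
  have h : ((orthogonalProjection (Submodule.span ℝ (v '' Set.Iio l)) (v l) :
      EuclideanSpace ℝ (Fin d))) = v l - gramSchmidt ℝ v l :=
    eq_starProjection_of_mem_of_inner_eq_zero (u := v l)
    (sub_gramSchmidt_mem v l) ?_
  · rw [h]; abel
  · intro w hw
    have h1 : v l - (v l - gramSchmidt ℝ v l) = gramSchmidt ℝ v l := by abel
    rw [h1]
    exact Submodule.inner_left_of_mem_orthogonal hw (gramSchmidt_mem_orthogonal'' v l)

lemma range_prefix_eq (l : Fin k) :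
    Set.range (fun j : Fin l.val => v (Fin.castLE l.isLt.le j)) = v '' Set.Iio l := by
  ext x
  constructor
  · rintro ⟨j, rfl⟩
    exact ⟨Fin.castLE l.isLt.le j, by simpa [Fin.lt_def] using j.isLt, rfl⟩
  · rintro ⟨i, hi, rfl⟩
    exact ⟨⟨i.val, hi⟩, rfl⟩

end GS

lemma vol_snoc_prefix {k : ℕ} (v : Fin k → EuclideanSpace ℝ (Fin d)) (l : Fin k)
    (p : EuclideanSpace ℝ (Fin d)) :
    vol (Fin.snoc (fun j : Fin l.val => v (Fin.castLE l.isLt.le j)) p) =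
      Real.sqrt (gram (fun j : Fin l.val => v (Fin.castLE l.isLt.le j))).det *
        ‖p - (orthogonalProjection (Submodule.span ℝ (v '' Set.Iio l)) p :
          EuclideanSpace ℝ (Fin d))‖ := by
  rw [vol_snoc, range_prefix_eq]

lemma claim {k : ℕ} {P : Finset (EuclideanSpace ℝ (Fin d))}
    {v : Fin k → EuclideanSpace ℝ (Fin d)} (hv : IsGreedySeq P v) (l : Fin k) :
    0 < (gram (fun j : Fin l.val => v (Fin.castLE l.isLt.le j))).det ∨
    ∀ p ∈ P, p ∈ Submodule.span ℝ (v '' Set.Iio l) := by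
  obtain ⟨t, ht⟩ := l
  induction t with
  | zero =>
    left
    simp [gram, Matrix.det_fin_zero]
  | succ t ih =>
    have ht' : t < k := Nat.lt_of_succ_lt ht
    set i : Fin k := ⟨t, ht'⟩ with hi
    have hsnoc : (fun j : Fin (t+1) => v (Fin.castLE (⟨t+1, ht⟩ : Fin k).isLt.le j)) =
        Fin.snoc (fun j : Fin i.val => v (Fin.castLE i.isLt.le j)) (v i) := by
      funext j
      refine Fin.lastCases ?_ (fun j' => ?_) j
      · rw [Fin.snoc_last]
        rfl
      · rw [Fin.snoc_castSucc]
        rfl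
    rcases ih ht' with hD | hmem
    · by_cases h0 : gramSchmidt ℝ v i = 0
      · right
        intro p hp
        have hgr := hv.2 i p hp
        rw [vol_snoc_prefix, vol_snoc_prefix, sub_orthProj_eq_gramSchmidt, h0, norm_zero,
          mul_zero] at hgr
        have hsq : 0 < Real.sqrt
            (gram (fun j : Fin i.val => v (Fin.castLE i.isLt.le j))).det :=
          Real.sqrt_pos.2 hD
        have hnn := norm_nonneg (p - (orthogonalProjection
          (Submodule.span ℝ (v '' Set.Iio i)) p : EuclideanSpace ℝ (Fin d)))
        have hle : ‖p - (orthogonalProjection (Submodule.span ℝ (v '' Set.Iio i)) p :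
            EuclideanSpace ℝ (Fin d))‖ ≤ 0 := by nlinarith
        have hz : p = (orthogonalProjection (Submodule.span ℝ (v '' Set.Iio i)) p :
            EuclideanSpace ℝ (Fin d)) := by
          have := norm_le_zero_iff.1 hle
          rw [sub_eq_zero] at this
          exact this
        have hmem2 : p ∈ Submodule.span ℝ (v '' Set.Iio i) := hz ▸ SetLike.coe_mem _
        refine Submodule.span_mono (Set.image_mono ?_) hmem2
        intro x hx
        exact lt_trans (Set.mem_Iio.1 hx) (by simp [hi, Fin.lt_def])
      · left
        rw [hsnoc]
        have hdet := det_gram_snoc (fun j : Fin i.val => v (Fin.castLE i.isLt.le j)) (v i)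
        rw [range_prefix_eq, sub_orthProj_eq_gramSchmidt] at hdet
        rw [hdet]
        exact mul_pos hD (pow_pos (norm_pos_iff.2 h0) 2)
    · right
      intro p hp
      refine Submodule.span_mono (Set.image_mono ?_) (hmem p hp)
      intro x hx
      exact lt_trans (Set.mem_Iio.1 hx) (by simp [hi, Fin.lt_def])


/-- **Gram–Schmidt coefficients of greedy are bounded by 1.** If `v 0, …, v (k-1)` is a
greedy sequence for `P` and `v' = gramSchmidt ℝ v` is its Gram–Schmidt orthogonalization, then
for every `l` and every `p ∈ P`, `|⟪p, v' l⟫| ≤ ‖v' l‖²`; equivalently, when `v' l ≠ 0` the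
Gram–Schmidt coefficient `α = ⟪p, v' l⟫ / ‖v' l‖²` of any `p ∈ P` along `v' l` satisfies
`|α| ≤ 1`. -/
theorem greedy_gramSchmidt_coeff_le_one {d k : ℕ} (hk : 1 ≤ k)
    (P : Finset (EuclideanSpace ℝ (Fin d)))
    (v : Fin k → EuclideanSpace ℝ (Fin d)) (hv : IsGreedySeq P v) :
    ∀ l : Fin k, ∀ p ∈ P,
      |⟪p, InnerProductSpace.gramSchmidt ℝ v l⟫| ≤ ‖InnerProductSpace.gramSchmidt ℝ v l‖ ^ 2 := by
  intro l p hp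
  by_cases h0 : gramSchmidt ℝ v l = 0
  · simp [h0]
  have hD : 0 < (gram (fun j : Fin l.val => v (Fin.castLE l.isLt.le j))).det := by
    rcases claim hv l with h | h
    · exact h
    · exfalso
      apply h0
      have hm := h (v l) (hv.1 l)
      have heq := sub_orthProj_eq_gramSchmidt v l
      have hs : ((orthogonalProjection (Submodule.span ℝ (v '' Set.Iio l)) (v l) :
          EuclideanSpace ℝ (Fin d))) = v l := starProjection_eq_self_iff.2 hm
      rw [← heq, hs, sub_self]
  have hgr := hv.2 l p hp
  rw [vol_snoc_prefix, vol_snoc_prefix, sub_orthProj_eq_gramSchmidt] at hgr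
  have hle : ‖p - (orthogonalProjection (Submodule.span ℝ (v '' Set.Iio l)) p :
      EuclideanSpace ℝ (Fin d))‖ ≤ ‖gramSchmidt ℝ v l‖ :=
    le_of_mul_le_mul_left hgr (Real.sqrt_pos.2 hD)
  have hperp := gramSchmidt_mem_orthogonal'' v l
  have hzero : ⟪(orthogonalProjection (Submodule.span ℝ (v '' Set.Iio l)) p :
      EuclideanSpace ℝ (Fin d)), gramSchmidt ℝ v l⟫ = 0 :=
    (Submodule.mem_orthogonal _ _).1 hperp _ (SetLike.coe_mem _)
  have hinner : ⟪p, gramSchmidt ℝ v l⟫ =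
      ⟪p - (orthogonalProjection (Submodule.span ℝ (v '' Set.Iio l)) p :
        EuclideanSpace ℝ (Fin d)), gramSchmidt ℝ v l⟫ := by
    rw [inner_sub_left, hzero, sub_zero]
  rw [hinner]
  calc |⟪p - (orthogonalProjection (Submodule.span ℝ (v '' Set.Iio l)) p :
        EuclideanSpace ℝ (Fin d)), gramSchmidt ℝ v l⟫|
      ≤ ‖p - (orthogonalProjection (Submodule.span ℝ (v '' Set.Iio l)) p :
        EuclideanSpace ℝ (Fin d))‖ * ‖gramSchmidt ℝ v l‖ := abs_real_inner_le_norm _ _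
    _ ≤ ‖gramSchmidt ℝ v l‖ * ‖gramSchmidt ℝ v l‖ :=
        mul_le_mul_of_nonneg_right hle (norm_nonneg _)
    _ = ‖gramSchmidt ℝ v l‖ ^ 2 := by ring
end

section
/- Let P be a finite set of vectors in ℝ^d, let k ≥ 1, let v_1,…,v_k be a greedy sequence for P, and let v'_1,…,v'_k be the Gram–Schmidt orthogonalization of v_1,…,v_k. Then for every t ∈ {1,…,k} and every p ∈ P, the distance from p to span{v_1,…,v_{t−1}} is at most ‖v'_t‖; in particular, ‖v'_1‖ ≥ ‖v'_2‖ ≥ … ≥ ‖v'_k‖. -/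
open scoped RealInnerProductSpace

open InnerProductSpace


open Finset in
lemma my_det_updateRow_add_sum {n : Type*} [Fintype n] [DecidableEq n] {R : Type*} [CommRing R]
    {ι : Type*} [DecidableEq ι] (s : Finset ι) (M : Matrix n n R) (r : n) (x : n → R) (c : ι → R)
    (f : ι → n) (hf : ∀ i ∈ s, f i ≠ r) :
    (M.updateRow r (x + ∑ i ∈ s, c i • M (f i))).det = (M.updateRow r x).det := by
  induction s using Finset.induction_on with
  | empty => simp
  | @insert k s hk ih =>
      have hfk : f k ≠ r := hf k (mem_insert_self _ _)
      rw [Finset.sum_insert hk, ← add_assoc, add_right_comm, Matrix.det_updateRow_add,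
        Matrix.det_updateRow_smul, Matrix.det_updateRow_eq_zero hfk, mul_zero, add_zero,
        ih fun i hi => hf i (mem_insert_of_mem hi)]

open Finset in
lemma my_det_updateCol_add_sum {n : Type*} [Fintype n] [DecidableEq n] {R : Type*} [CommRing R]
    {ι : Type*} [DecidableEq ι] (s : Finset ι) (M : Matrix n n R) (r : n) (x : n → R) (c : ι → R)
    (f : ι → n) (hf : ∀ i ∈ s, f i ≠ r) :
    (M.updateCol r (x + ∑ i ∈ s, c i • fun a => M a (f i))).det = (M.updateCol r x).det := by
  rw [← Matrix.det_transpose, ← Matrix.updateRow_transpose, ← Matrix.det_transpose (M.updateCol r x),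
    ← Matrix.updateRow_transpose]
  have := my_det_updateRow_add_sum s M.transpose r x c f hf
  exact this

lemma my_infDist_eq {d : ℕ} (K : Submodule ℝ (EuclideanSpace ℝ (Fin d)))
    (p : EuclideanSpace ℝ (Fin d)) :
    Metric.infDist p (K : Set (EuclideanSpace ℝ (Fin d))) = ‖p - Submodule.orthogonalProjectionOnto K p‖ := by
  rw [Metric.infDist_eq_iInf, ← Submodule.starProjection_apply, Submodule.starProjection_minimal]
  simp_rw [dist_eq_norm]
  rfl

lemma my_gs_orth {d k : ℕ} (v : Fin k → EuclideanSpace ℝ (Fin d)) (t : Fin k) :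
    ∀ w ∈ Submodule.span ℝ (v '' Set.Iio t), ⟪gramSchmidt ℝ v t, w⟫ = 0 := by
  intro w hw
  rw [← span_gramSchmidt_Iio ℝ v t] at hw
  have hle : Submodule.span ℝ (gramSchmidt ℝ v '' Set.Iio t) ≤ (ℝ ∙ gramSchmidt ℝ v t)ᗮ := by
    rw [Submodule.span_le]
    rintro _ ⟨i, hi, rfl⟩
    rw [SetLike.mem_coe, Submodule.mem_orthogonal_singleton_iff_inner_right]
    exact gramSchmidt_orthogonal ℝ v (ne_of_gt hi)
  exact (hle hw) (gramSchmidt ℝ v t) (Submodule.mem_span_singleton_self _)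

lemma my_proj_gs {d k : ℕ} (v : Fin k → EuclideanSpace ℝ (Fin d)) (t : Fin k) :
    (Submodule.orthogonalProjectionOnto (Submodule.span ℝ (v '' Set.Iio t)) (v t) :
      EuclideanSpace ℝ (Fin d)) = v t - gramSchmidt ℝ v t := by
  apply Submodule.eq_starProjection_of_mem_of_inner_eq_zero
  · have : v t - gramSchmidt ℝ v t
        = ∑ i ∈ Finset.Iio t, ((ℝ ∙ gramSchmidt ℝ v i).starProjection (v t) :
            EuclideanSpace ℝ (Fin d)) := by
      conv_lhs => rw [gramSchmidt_def ℝ v t]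
      abel
    rw [this]
    refine Submodule.sum_mem _ fun i hi => ?_
    rw [← span_gramSchmidt_Iio ℝ v t]
    have h1 : (ℝ ∙ gramSchmidt ℝ v i) ≤ Submodule.span ℝ (gramSchmidt ℝ v '' Set.Iio t) := by
      rw [Submodule.span_singleton_le_iff_mem]
      exact Submodule.subset_span ⟨i, Finset.mem_Iio.1 hi, rfl⟩
    exact h1 (Submodule.starProjection_apply_mem _ _)
  · intro w hw
    have : v t - (v t - gramSchmidt ℝ v t) = gramSchmidt ℝ v t := by abel
    rw [this]
    exact my_gs_orth v t w hw

lemma my_infDist_gs {d k : ℕ} (v : Fin k → EuclideanSpace ℝ (Fin d)) (t : Fin k) :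
    Metric.infDist (v t)
      ((Submodule.span ℝ (v '' {j : Fin k | j < t}) :
        Submodule ℝ (EuclideanSpace ℝ (Fin d))) : Set (EuclideanSpace ℝ (Fin d)))
      = ‖gramSchmidt ℝ v t‖ := by
  have h : (v '' {j : Fin k | j < t}) = v '' Set.Iio t := rfl
  rw [h, my_infDist_eq, my_proj_gs]
  congr 1
  abel

lemma my_detGram_snoc {d m : ℕ} (u : Fin m → EuclideanSpace ℝ (Fin d))
    (p : EuclideanSpace ℝ (Fin d)) :
    (Matrix.of fun a b : Fin (m+1) =>
        ⟪(Fin.snoc u p : Fin (m+1) → EuclideanSpace ℝ (Fin d)) a,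
         (Fin.snoc u p : Fin (m+1) → EuclideanSpace ℝ (Fin d)) b⟫).det =
      (Matrix.of fun a b : Fin m => ⟪u a, u b⟫).det *
        (Metric.infDist p ((Submodule.span ℝ (Set.range u) :
            Submodule ℝ (EuclideanSpace ℝ (Fin d))) : Set (EuclideanSpace ℝ (Fin d))))^2 := by
  set K := Submodule.span ℝ (Set.range u) with hK
  set q : EuclideanSpace ℝ (Fin d) := p - Submodule.orthogonalProjectionOnto K p with hq
  have hdist : Metric.infDist p (K : Set (EuclideanSpace ℝ (Fin d))) = ‖q‖ := my_infDist_eq K p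
  have hpq : p - q ∈ K := by
    have := (Submodule.orthogonalProjectionOnto K p).2
    simpa [hq] using this
  have hqorth : ∀ x ∈ K, ⟪x, q⟫ = 0 := by
    intro x hx
    exact (Submodule.sub_starProjection_mem_orthogonal p) x hx
  obtain ⟨c, hc⟩ := (Submodule.mem_span_range_iff_exists_fun ℝ).1 hpq
  set w : Fin (m+1) → EuclideanSpace ℝ (Fin d) := Fin.snoc u p with hw
  set N : Matrix (Fin (m+1)) (Fin (m+1)) ℝ := Matrix.of fun a b => ⟪w a, w b⟫ with hN
  have hqu : ∀ a : Fin m, ⟪u a, q⟫ = 0 := fun a => hqorth _ (Submodule.subset_span ⟨a, rfl⟩)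
  have hqu' : ∀ a : Fin m, ⟪q, u a⟫ = 0 := fun a => by rw [real_inner_comm]; exact hqu a
  have hpdec : p = q + ∑ i, c i • u i := by rw [hc]; abel
  have hwl : w (Fin.last m) = p := by simp [hw]
  have hwc : ∀ i : Fin m, w (Fin.castSucc i) = u i := fun i => by simp [hw]
  have hpw : ∀ b, ⟪p, w b⟫ = ⟪q, w b⟫ + ∑ i, c i * ⟪u i, w b⟫ := by
    intro b
    conv_lhs => rw [hpdec]
    rw [inner_add_left, sum_inner]
    simp [real_inner_smul_left, Finset.mul_sum, mul_assoc, mul_left_comm]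
  have hwp : ∀ a : Fin m, ⟪u a, p⟫ = ⟪u a, q⟫ + ∑ i, c i * ⟪u a, u i⟫ := by
    intro a
    conv_lhs => rw [hpdec]
    rw [inner_add_right, inner_sum]
    simp [real_inner_smul_right, Finset.mul_sum, mul_assoc, mul_left_comm]
  have hqp : ⟪p, q⟫ = ‖q‖^2 := by
    have : ⟪p, q⟫ = ⟪p - q, q⟫ + ⟪q, q⟫ := by rw [← inner_add_left]; congr 1; abel
    rw [this, hqorth _ hpq, zero_add, real_inner_self_eq_norm_sq]
  -- Step 1 : row operation
  have step1 : N.det = (N.updateRow (Fin.last m) (fun b => ⟪q, w b⟫)).det := by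
    have hrow : N (Fin.last m) = (fun b => ⟪q, w b⟫) + ∑ i : Fin m, c i • N (Fin.castSucc i) := by
      funext b
      have h1 : N (Fin.last m) b = ⟪p, w b⟫ := by simp [hN, hwl]
      have h2 : ∀ i : Fin m, N (Fin.castSucc i) b = ⟪u i, w b⟫ := fun i => by simp [hN, hwc i]
      simp only [Pi.add_apply, Finset.sum_apply, Pi.smul_apply, smul_eq_mul, h1, h2, hpw b]
    conv_lhs => rw [← Matrix.updateRow_eq_self N (Fin.last m), hrow]
    exact my_det_updateRow_add_sum Finset.univ N (Fin.last m) _ c Fin.castSucc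
      (fun i _ => (Fin.castSucc_lt_last i).ne)
  set A := N.updateRow (Fin.last m) (fun b => ⟪q, w b⟫) with hA
  have hAc : ∀ (a : Fin m) b, A (Fin.castSucc a) b = ⟪u a, w b⟫ := by
    intro a b
    rw [hA, Matrix.updateRow_ne (Fin.castSucc_lt_last a).ne]
    simp [hN, hwc a]
  have hAl : ∀ b, A (Fin.last m) b = ⟪q, w b⟫ := by
    intro b; rw [hA, Matrix.updateRow_self]
  -- Step 2 : column operation
  have step2 : A.det = (A.updateCol (Fin.last m) (fun a => ⟪w a, q⟫)).det := by
    have hcol : (fun a => A a (Fin.last m)) =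
        (fun a => ⟪w a, q⟫) + ∑ i : Fin m, c i • (fun a => A a (Fin.castSucc i)) := by
      funext a
      simp only [Pi.add_apply, Finset.sum_apply, Pi.smul_apply, smul_eq_mul]
      refine Fin.lastCases ?_ (fun a' => ?_) a
      · simp only [hAl, hwl, hwc, hqu', mul_zero, Finset.sum_const_zero, add_zero]
        exact real_inner_comm p q
      · simp only [hAc, hwl, hwc]
        exact hwp a'
    conv_lhs => rw [← Matrix.updateCol_eq_self A (Fin.last m), hcol]
    exact my_det_updateCol_add_sum Finset.univ A (Fin.last m) _ c Fin.castSucc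
      (fun i _ => (Fin.castSucc_lt_last i).ne)
  set B := A.updateCol (Fin.last m) (fun a => ⟪w a, q⟫) with hB
  -- Step 3 : expand along the last row
  have hBlast : ∀ j : Fin m, B (Fin.last m) (Fin.castSucc j) = 0 := by
    intro j
    rw [hB, Matrix.updateCol_ne (Fin.castSucc_lt_last j).ne, hAl, hwc]
    exact hqu' j
  have hBll : B (Fin.last m) (Fin.last m) = ‖q‖^2 := by
    rw [hB, Matrix.updateCol_self, hwl, hqp]
  have hBsub : B.submatrix (Fin.last m).succAbove (Fin.last m).succAbove =
      Matrix.of fun a b : Fin m => ⟪u a, u b⟫ := by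
    ext a b
    rw [Matrix.submatrix_apply, Fin.succAbove_last_apply, Fin.succAbove_last_apply, hB,
      Matrix.updateCol_ne (Fin.castSucc_lt_last b).ne, hAc, hwc]
    simp
  have step3 : B.det = ‖q‖^2 * (Matrix.of fun a b : Fin m => ⟪u a, u b⟫).det := by
    rw [Matrix.det_succ_row B (Fin.last m)]
    rw [Finset.sum_eq_single (Fin.last m)]
    · rw [hBll, hBsub]
      have h2 : ((Fin.last m : ℕ) + (Fin.last m : ℕ)) = 2 * m := by
        rw [Fin.val_last]; ring
      rw [h2, pow_mul, neg_one_sq, one_pow, one_mul]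
    · intro j _ hj
      rcases Fin.exists_castSucc_eq.2 hj with ⟨j', rfl⟩
      rw [hBlast j']
      ring
    · intro h; exact absurd (Finset.mem_univ _) h
  rw [step1, step2, step3, hdist]
  ring

lemma my_range_eq {d k : ℕ} (v : Fin k → EuclideanSpace ℝ (Fin d)) (n : ℕ) (h : n < k) :
    Set.range (fun j : Fin n => v (Fin.castLE h.le j)) = v '' {j : Fin k | j < ⟨n, h⟩} := by
  ext x
  constructor
  · rintro ⟨j, rfl⟩
    exact ⟨Fin.castLE h.le j, by simpa [Fin.lt_def] using j.isLt, rfl⟩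
  · rintro ⟨j, hj, rfl⟩
    have hj' : (j : ℕ) < n := hj
    refine ⟨⟨j.val, hj'⟩, ?_⟩
    congr 1

lemma my_detGram_prod {d k : ℕ} (v : Fin k → EuclideanSpace ℝ (Fin d)) :
    ∀ n (h : n ≤ k),
      (Matrix.of fun a b : Fin n => ⟪v (Fin.castLE h a), v (Fin.castLE h b)⟫).det
        = ∏ j : Fin n, ‖gramSchmidt ℝ v (Fin.castLE h j)‖^2 := by
  intro n
  induction n with
  | zero => intro h; simp [Matrix.det_fin_zero]
  | succ n ih =>
    intro h
    have hn : n < k := lt_of_lt_of_le (Nat.lt_succ_self n) h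
    have hfun : (fun j : Fin (n+1) => v (Fin.castLE h j))
        = Fin.snoc (fun j : Fin n => v (Fin.castLE hn.le j)) (v ⟨n, hn⟩) := by
      funext j
      refine Fin.lastCases ?_ (fun j' => ?_) j
      · rw [Fin.snoc_last]; rfl
      · rw [Fin.snoc_castSucc]; rfl
    have hmat : (Matrix.of fun a b : Fin (n+1) => ⟪v (Fin.castLE h a), v (Fin.castLE h b)⟫)
        = Matrix.of fun a b : Fin (n+1) =>
            ⟪(Fin.snoc (fun j : Fin n => v (Fin.castLE hn.le j)) (v ⟨n, hn⟩) :
                Fin (n+1) → EuclideanSpace ℝ (Fin d)) a,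
             (Fin.snoc (fun j : Fin n => v (Fin.castLE hn.le j)) (v ⟨n, hn⟩) :
                Fin (n+1) → EuclideanSpace ℝ (Fin d)) b⟫ := by
      ext a b
      simp only [Matrix.of_apply]
      exact congrArg₂ (fun x y => (⟪x, y⟫ : ℝ)) (congrFun hfun a) (congrFun hfun b)
    rw [hmat, my_detGram_snoc, ih hn.le, my_range_eq v n hn, my_infDist_gs v ⟨n, hn⟩,
      Fin.prod_univ_castSucc]
    rfl

/-- **Greedy maximizes distances, and Gram–Schmidt norms are non-increasing.** If
`v 0, …, v (k-1)` is a greedy sequence for `P` and `v' = gramSchmidt ℝ v` is its Gram–Schmidt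
orthogonalization, then for every `t` and every `p ∈ P`, the distance from `p` to
`span {v 0, …, v (t-1)}` is at most `‖v' t‖`; in particular
`‖v' 0‖ ≥ ‖v' 1‖ ≥ … ≥ ‖v' (k-1)‖`. -/
theorem greedy_dist_le_and_gramSchmidt_norm_antitone {d k : ℕ} (hk : 1 ≤ k)
    (P : Finset (EuclideanSpace ℝ (Fin d)))
    (v : Fin k → EuclideanSpace ℝ (Fin d)) (hv : IsGreedySeq P v) :
    (∀ t : Fin k, ∀ p ∈ P,
      Metric.infDist p
        ((Submodule.span ℝ (v '' {j : Fin k | j < t}) : Submodule ℝ (EuclideanSpace ℝ (Fin d))) :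
          Set (EuclideanSpace ℝ (Fin d))) ≤ ‖InnerProductSpace.gramSchmidt ℝ v t‖) ∧
    (∀ s t : Fin k, s ≤ t → ‖InnerProductSpace.gramSchmidt ℝ v t‖ ≤ ‖InnerProductSpace.gramSchmidt ℝ v s‖) := by
  have key : ∀ t : Fin k, ∀ p ∈ P,
      Real.sqrt (∏ j : Fin t.val, ‖gramSchmidt ℝ v (Fin.castLE t.isLt.le j)‖^2) *
        Metric.infDist p
          ((Submodule.span ℝ (v '' {j : Fin k | j < t}) :
            Submodule ℝ (EuclideanSpace ℝ (Fin d))) : Set (EuclideanSpace ℝ (Fin d)))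
      ≤ Real.sqrt (∏ j : Fin t.val, ‖gramSchmidt ℝ v (Fin.castLE t.isLt.le j)‖^2) *
        ‖gramSchmidt ℝ v t‖ := by
    intro t p hp
    have hgr := hv.2 t p hp
    unfold vol at hgr
    rw [my_detGram_snoc, my_detGram_snoc, my_detGram_prod v t.val t.isLt.le,
      my_range_eq v t.val t.isLt] at hgr
    simp only [Fin.eta] at hgr
    rw [my_infDist_gs v t] at hgr
    have hD0 : (0:ℝ) ≤ ∏ j : Fin t.val, ‖gramSchmidt ℝ v (Fin.castLE t.isLt.le j)‖^2 :=
      Finset.prod_nonneg fun _ _ => sq_nonneg _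
    rw [Real.sqrt_mul hD0, Real.sqrt_mul hD0, Real.sqrt_sq Metric.infDist_nonneg,
      Real.sqrt_sq (norm_nonneg _)] at hgr
    exact hgr
  have part1 : ∀ t : Fin k, ∀ p ∈ P,
      Metric.infDist p
        ((Submodule.span ℝ (v '' {j : Fin k | j < t}) :
          Submodule ℝ (EuclideanSpace ℝ (Fin d))) : Set (EuclideanSpace ℝ (Fin d)))
        ≤ ‖gramSchmidt ℝ v t‖ := by
    classical
    intro t p hp
    by_cases hD : 0 < ∏ j : Fin t.val, ‖gramSchmidt ℝ v (Fin.castLE t.isLt.le j)‖^2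
    · exact le_of_mul_le_mul_left (key t p hp) (Real.sqrt_pos.2 hD)
    · have hD0 : (0:ℝ) ≤ ∏ j : Fin t.val, ‖gramSchmidt ℝ v (Fin.castLE t.isLt.le j)‖^2 :=
        Finset.prod_nonneg fun _ _ => sq_nonneg _
      have hDeq : (∏ j : Fin t.val, ‖gramSchmidt ℝ v (Fin.castLE t.isLt.le j)‖^2) = 0 :=
        le_antisymm (not_lt.1 hD) hD0
      obtain ⟨j0, -, hj0⟩ := Finset.prod_eq_zero_iff.1 hDeq
      have hj0' : gramSchmidt ℝ v (Fin.castLE t.isLt.le j0) = 0 := by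
        rwa [pow_eq_zero_iff (two_ne_zero), norm_eq_zero] at hj0
      have hTne : (Finset.univ.filter
          (fun s : Fin k => gramSchmidt ℝ v s = 0 ∧ s < t)).Nonempty := by
        refine ⟨Fin.castLE t.isLt.le j0, ?_⟩
        rw [Finset.mem_filter]
        exact ⟨Finset.mem_univ _, hj0', by simpa [Fin.lt_def] using j0.isLt⟩
      obtain ⟨s, hsT, hsmin⟩ :
          ∃ s ∈ Finset.univ.filter (fun s : Fin k => gramSchmidt ℝ v s = 0 ∧ s < t),
            ∀ x ∈ Finset.univ.filter (fun s : Fin k => gramSchmidt ℝ v s = 0 ∧ s < t), s ≤ x :=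
        ⟨_, Finset.min'_mem _ hTne, fun x hx => Finset.min'_le _ x hx⟩
      rw [Finset.mem_filter] at hsT
      obtain ⟨-, hs1, hs2⟩ := hsT
      have hDs : 0 < ∏ j : Fin s.val, ‖gramSchmidt ℝ v (Fin.castLE s.isLt.le j)‖^2 := by
        refine Finset.prod_pos fun j _ => ?_
        have hne : gramSchmidt ℝ v (Fin.castLE s.isLt.le j) ≠ 0 := by
          intro h0
          have hjs : Fin.castLE s.isLt.le j < s := by simpa [Fin.lt_def] using j.isLt
          have hmem : Fin.castLE s.isLt.le j ∈
              Finset.univ.filter (fun s : Fin k => gramSchmidt ℝ v s = 0 ∧ s < t) := by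
            rw [Finset.mem_filter]
            exact ⟨Finset.mem_univ _, h0, hjs.trans hs2⟩
          exact absurd hjs (not_lt.2 (hsmin _ hmem))
        exact pow_pos (norm_pos_iff.2 hne) 2
      have hks := key s p hp
      rw [hs1, norm_zero, mul_zero] at hks
      have h0 : Metric.infDist p
          ((Submodule.span ℝ (v '' {j : Fin k | j < s}) :
            Submodule ℝ (EuclideanSpace ℝ (Fin d))) : Set (EuclideanSpace ℝ (Fin d))) = 0 := by
        refine le_antisymm ?_ Metric.infDist_nonneg
        have hsq : 0 < Real.sqrt (∏ j : Fin s.val, ‖gramSchmidt ℝ v (Fin.castLE s.isLt.le j)‖^2) :=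
          Real.sqrt_pos.2 hDs
        nlinarith [Metric.infDist_nonneg (x := p)
          (s := ((Submodule.span ℝ (v '' {j : Fin k | j < s}) :
            Submodule ℝ (EuclideanSpace ℝ (Fin d))) : Set (EuclideanSpace ℝ (Fin d))))]
      have hclosed : IsClosed ((Submodule.span ℝ (v '' {j : Fin k | j < s}) :
          Submodule ℝ (EuclideanSpace ℝ (Fin d))) : Set (EuclideanSpace ℝ (Fin d))) :=
        Submodule.closed_of_finiteDimensional _
      have hpK : p ∈ (Submodule.span ℝ (v '' {j : Fin k | j < s}) :
          Submodule ℝ (EuclideanSpace ℝ (Fin d))) :=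
        (hclosed.mem_iff_infDist_zero ⟨0, Submodule.zero_mem _⟩).2 h0
      have hle : (Submodule.span ℝ (v '' {j : Fin k | j < s}) :
            Submodule ℝ (EuclideanSpace ℝ (Fin d)))
          ≤ Submodule.span ℝ (v '' {j : Fin k | j < t}) :=
        Submodule.span_mono (Set.image_mono fun j hj => lt_trans hj hs2)
      rw [Metric.infDist_zero_of_mem (hle hpK)]
      exact norm_nonneg _
  refine ⟨part1, fun s t hst => ?_⟩
  have hsub : ((Submodule.span ℝ (v '' {j : Fin k | j < s}) :
        Submodule ℝ (EuclideanSpace ℝ (Fin d))) : Set (EuclideanSpace ℝ (Fin d)))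
      ⊆ ((Submodule.span ℝ (v '' {j : Fin k | j < t}) :
        Submodule ℝ (EuclideanSpace ℝ (Fin d))) : Set (EuclideanSpace ℝ (Fin d))) :=
    Submodule.span_mono (Set.image_mono fun j hj => lt_of_lt_of_le hj hst)
  calc ‖gramSchmidt ℝ v t‖
      = Metric.infDist (v t)
          ((Submodule.span ℝ (v '' {j : Fin k | j < t}) :
            Submodule ℝ (EuclideanSpace ℝ (Fin d))) : Set (EuclideanSpace ℝ (Fin d))) :=
        (my_infDist_gs v t).symm
    _ ≤ Metric.infDist (v t)
          ((Submodule.span ℝ (v '' {j : Fin k | j < s}) :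
            Submodule ℝ (EuclideanSpace ℝ (Fin d))) : Set (EuclideanSpace ℝ (Fin d))) :=
        Metric.infDist_le_infDist_of_subset hsub ⟨0, Submodule.zero_mem _⟩
    _ ≤ ‖gramSchmidt ℝ v s‖ := part1 s (v t) (hv.1 t)
end
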